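/- Let n ≥ 4 be an even integer and let G be an n-vertex graph with minimum degree δ(G) ≥ n/2 + 2, whose edges are colored with 2 colors. If G contains an odd-chromatic copy of the 4-cycle C_4, then G contains an even-chromatic Hamilton cycle. -/

import Mathlib

set_option linter.unusedSectionVars false
set_option linter.unusedVariables false
set_option linter.deprecated false
set_option linter.unreachableTactic false
set_option linter.unusedTactic false
set_option maxHeartbeats 1000000

open List

namespace EvenHam


variable {V : Type*} [DecidableEq V]

/-- The list of edges of a path given by a vertex list. -/
def eList : List V → List (Sym2 V)
  | [] => []
  | [_] => []
  | x :: y :: l => s(x, y) :: eList (y :: l)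

@[simp] lemma eList_nil : eList ([] : List V) = [] := rfl
@[simp] lemma eList_single (x : V) : eList [x] = [] := rfl
@[simp] lemma eList_cons_cons (x y : V) (l : List V) :
    eList (x :: y :: l) = s(x, y) :: eList (y :: l) := rfl

lemma eList_split (a x : V) : ∀ (l₁ l₂ : List V),
    eList (a :: (l₁ ++ x :: l₂)) = eList (a :: l₁ ++ [x]) ++ eList (x :: l₂)
  | [], l₂ => by simp
  | y :: l₁, l₂ => by
    have := eList_split y x l₁ l₂
    simp only [cons_append, eList_cons_cons] at this ⊢
    rw [this]

lemma mem_eList : ∀ {L : List V} {e : Sym2 V}, e ∈ eList L →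
    ∃ u v L₁ L₂, L = L₁ ++ u :: v :: L₂ ∧ e = s(u, v)
  | [], e => by simp [eList]
  | [x], e => by simp [eList]
  | x :: y :: l, e => by
    intro he
    rcases (List.mem_cons).1 he with h | h
    · exact ⟨x, y, [], l, by simp, h⟩
    · obtain ⟨u, v, L₁, L₂, h1, h2⟩ := mem_eList h
      exact ⟨u, v, x :: L₁, L₂, by simp [h1], h2⟩

/-- Build a walk from a chain list. -/
def mkWalk (G : SimpleGraph V) : ∀ (a b : V) (l : List V),
    List.Chain G.Adj a (l ++ [b]) → G.Walk a b
  | a, b, [], h => SimpleGraph.Walk.cons ((List.chain_cons.mp h).1) SimpleGraph.Walk.nil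
  | a, b, x :: l, h =>
    SimpleGraph.Walk.cons ((List.chain_cons.mp h).1) (mkWalk G x b l (List.chain_cons.mp h).2)

@[simp] lemma support_mkWalk (G : SimpleGraph V) : ∀ (a b : V) (l : List V)
    (h : List.Chain G.Adj a (l ++ [b])), (mkWalk G a b l h).support = a :: (l ++ [b])
  | a, b, [], h => rfl
  | a, b, x :: l, h => by
    simp [mkWalk, support_mkWalk G x b l]
    exact support_mkWalk G x b l _

@[simp] lemma edges_mkWalk (G : SimpleGraph V) : ∀ (a b : V) (l : List V)
    (h : List.Chain G.Adj a (l ++ [b])), (mkWalk G a b l h).edges = eList (a :: (l ++ [b]))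
  | a, b, [], h => rfl
  | a, b, x :: l, h => by
    simp [mkWalk, edges_mkWalk G x b l]
    exact edges_mkWalk G x b l _

lemma chain_snoc {R : V → V → Prop} : ∀ {a : V} (l : List V) {b : V},
    List.Chain R a l → R ((a :: l).getLast (by simp)) b → List.Chain R a (l ++ [b])
  | a, [], b, _, hr => by
    exact List.chain_cons.2 ⟨by simpa using hr, List.Chain.nil⟩
  | a, x :: l, b, hch, hr => by
    rcases List.chain_cons.1 hch with ⟨h1, h2⟩
    refine List.chain_cons.2 ⟨h1, chain_snoc l h2 ?_⟩
    rwa [List.getLast_cons (by simp)] at hr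

lemma chain_init {R : V → V → Prop} : ∀ (l : List V) {a b : V},
    List.Chain R a (l ++ [b]) → List.Chain R a l
  | [], a, b, _ => List.Chain.nil
  | x :: l, a, b, h => by
    rcases List.chain_cons.1 h with ⟨h1, h2⟩
    exact List.chain_cons.2 ⟨h1, chain_init l h2⟩

lemma chain_getLast_mem_or {R : V → V → Prop} : True := trivial

/-- cyclic chain predicate -/
def CycChain (H : SimpleGraph V) : List V → Prop
  | [] => True
  | a :: m => List.Chain H.Adj a (m ++ [a])

lemma cycChain_cons {H : SimpleGraph V} {a : V} {m : List V} :
    CycChain H (a :: m) ↔ List.Chain H.Adj a (m ++ [a]) := Iff.rfl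

lemma CycChain.rotate_one {H : SimpleGraph V} {x : V} {m : List V}
    (h : CycChain H (x :: m)) : CycChain H (m ++ [x]) := by
  cases m with
  | nil => simpa using h
  | cons y m' =>
    rw [cycChain_cons] at h
    rcases List.chain_cons.1 h with ⟨h1, h2⟩
    show CycChain H (y :: (m' ++ [x]))
    rw [cycChain_cons]
    refine chain_snoc _ h2 ?_
    have hx : (y :: (m' ++ [x])).getLast (by simp) = x := by
      rw [List.getLast_cons (by simp)]
      exact List.getLast_concat
    rw [hx]
    exact h1

lemma CycChain.rotate {H : SimpleGraph V} : ∀ (k : ℕ) {L : List V},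
    CycChain H L → CycChain H (L.rotate k)
  | 0, L, h => by simpa using h
  | (k+1), [], h => by simp [List.rotate_nil]; trivial
  | (k+1), x :: m, h => by
    rw [List.rotate_cons_succ]
    exact CycChain.rotate k h.rotate_one

/-- Hamiltonian cycle as a list. -/
def HamCycL [Fintype V] (H : SimpleGraph V) : Prop :=
  ∃ (a : V) (m : List V), (a :: m).Nodup ∧ (∀ v, v ∈ a :: m) ∧
    List.Chain H.Adj a (m ++ [a])

lemma length_eq_card [Fintype V] {l : List V} (hnd : l.Nodup) (hcov : ∀ v, v ∈ l) :
    l.length = Fintype.card V := by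
  rw [← List.toFinset_card_of_nodup hnd]
  congr 1
  apply Finset.eq_univ_iff_forall.2
  intro v; simpa using hcov v




section Transfer

lemma transfer_path (H : SimpleGraph V) {u v : V} {Q : List V}
    (hQnd : Q.Nodup) (h3 : 3 ≤ Q.length)
    (hhead : Q.head? = some u) (hlast : Q.getLast? = some v)
    (hch : List.Chain' (H ⊔ SimpleGraph.fromEdgeSet {s(u, v)}).Adj Q) :
    List.Chain' H.Adj Q := by
  have hQN : Q ≠ [] := by rintro rfl; simp at hhead
  have hinj : Function.Injective Q.get := List.nodup_iff_injective_get.1 hQnd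
  have h0lt : 0 < Q.length := by omega
  have h0 : Q.get ⟨0, h0lt⟩ = u := by
    cases Q with
    | nil => simp at hhead
    | cons x t => simpa using hhead
  have hlastlt : Q.length - 1 < Q.length := by omega
  have hN : Q.get ⟨Q.length - 1, hlastlt⟩ = v := by
    rw [List.get_eq_getElem, ← List.getLast_eq_getElem hQN]
    rw [List.getLast?_eq_getLast hQN] at hlast
    exact Option.some.inj hlast
  unfold List.Chain' at hch ⊢
  rw [List.isChain_iff_getElem] at hch ⊢
  intro i hi
  have hadj := hch i hi
  rw [SimpleGraph.sup_adj, SimpleGraph.fromEdgeSet_adj] at hadj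
  rcases hadj with h | ⟨hmem, hne2⟩
  · exact h
  · exfalso
    rw [Set.mem_singleton_iff, Sym2.eq_iff] at hmem
    rcases hmem with ⟨ha, hb⟩ | ⟨ha, hb⟩
    · -- get i = u, get (i+1) = v
      have : (⟨i, by omega⟩ : Fin Q.length) = ⟨0, h0lt⟩ := hinj (by rw [h0, List.get_eq_getElem]; exact ha)
      have hi0 : i = 0 := by simpa using this
      have : (⟨i + 1, by omega⟩ : Fin Q.length) = ⟨Q.length - 1, hlastlt⟩ :=
        hinj (by rw [hN, List.get_eq_getElem]; exact hb)
      have : i + 1 = Q.length - 1 := by simpa using this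
      omega
    · -- get i = v
      have : (⟨i, by omega⟩ : Fin Q.length) = ⟨Q.length - 1, hlastlt⟩ :=
        hinj (by rw [hN, List.get_eq_getElem]; exact ha)
      have : i = Q.length - 1 := by simpa using this
      omega

lemma transfer_aux (H : SimpleGraph V) {u v : V} (hne : u ≠ v) :
    ∀ (l : List V) (x : V), u ∉ x :: l → (x :: l).getLast? ≠ some v →
    List.Chain (H ⊔ SimpleGraph.fromEdgeSet {s(u, v)}).Adj x (l ++ [u]) →
    List.Chain H.Adj x (l ++ [u])
  | [], x, hu, hl, hch => by
    rcases List.chain_cons.1 hch with ⟨h1, -⟩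
    refine List.chain_cons.2 ⟨?_, List.Chain.nil⟩
    rw [SimpleGraph.sup_adj, SimpleGraph.fromEdgeSet_adj] at h1
    rcases h1 with h | ⟨hmem, hne2⟩
    · exact h
    · exfalso
      rw [Set.mem_singleton_iff, Sym2.eq_iff] at hmem
      rcases hmem with ⟨ha, hb⟩ | ⟨ha, hb⟩
      · exact hu (by simp [ha])
      · exact hl (by simp [ha])
  | y :: l, x, hu, hl, hch => by
    rcases List.chain_cons.1 hch with ⟨h1, h2⟩
    refine List.chain_cons.2 ⟨?_, ?_⟩
    · rw [SimpleGraph.sup_adj, SimpleGraph.fromEdgeSet_adj] at h1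
      rcases h1 with h | ⟨hmem, hne2⟩
      · exact h
      · exfalso
        rw [Set.mem_singleton_iff, Sym2.eq_iff] at hmem
        rcases hmem with ⟨ha, hb⟩ | ⟨ha, hb⟩
        · exact hu (by simp [ha])
        · exact hu (by simp [hb])
    · exact transfer_aux H hne l y (fun hmem => hu (List.mem_cons_of_mem _ hmem))
        (by rwa [List.getLast?_cons_cons] at hl) h2

lemma transfer_cyc (H : SimpleGraph V) {u v : V} (hne : u ≠ v) {m : List V}
    (hnd : (u :: m).Nodup) (hh : m.head? ≠ some v) (hl : m.getLast? ≠ some v)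
    (hch : List.Chain (H ⊔ SimpleGraph.fromEdgeSet {s(u, v)}).Adj u (m ++ [u])) :
    List.Chain H.Adj u (m ++ [u]) := by
  cases m with
  | nil =>
    rcases List.chain_cons.1 hch with ⟨h1, -⟩
    exact absurd h1 ((H ⊔ _).irrefl)
  | cons x m' =>
    rcases List.chain_cons.1 hch with ⟨h1, h2⟩
    refine List.chain_cons.2 ⟨?_, ?_⟩
    · rw [SimpleGraph.sup_adj, SimpleGraph.fromEdgeSet_adj] at h1
      rcases h1 with h | ⟨hmem, hne2⟩
      · exact h
      · exfalso
        rw [Set.mem_singleton_iff, Sym2.eq_iff] at hmem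
        rcases hmem with ⟨ha, hb⟩ | ⟨ha, hb⟩
        · exact hh (by simp [hb])
        · exact hne ha
    · exact transfer_aux H hne m' x (by simp at hnd ⊢; tauto) hl h2

end Transfer





lemma get_congr (Q : List V) {i j : ℕ} (hi : i < Q.length) (hj : j < Q.length)
    (h : i = j) : Q.get ⟨i, hi⟩ = Q.get ⟨j, hj⟩ := by subst h; rfl

lemma head?_eq_get (l : List V) (h : l ≠ []) :
    l.head? = some (l.get ⟨0, List.length_pos_iff.2 h⟩) := by
  cases l with
  | nil => exact absurd rfl h
  | cons x t => rfl

lemma getLast_of_getLast? {l : List V} {x : V} (h : l ≠ []) (h2 : l.getLast? = some x) :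
    l.getLast h = x := by
  rw [List.getLast?_eq_getLast h] at h2
  exact Option.some.inj h2

lemma crossover [Fintype V] (H : SimpleGraph V) [DecidableRel H.Adj] {u v : V}
    (hnadj : ¬H.Adj u v) {Q : List V} (hnd : Q.Nodup) (hcov : ∀ z, z ∈ Q)
    (hch : List.Chain' H.Adj Q) (hhead : Q.head? = some u) (hlast : Q.getLast? = some v)
    (hdeg : Fintype.card V ≤ H.degree u + H.degree v) : HamCycL H := by
  classical
  have hlen : Q.length = Fintype.card V := length_eq_card hnd hcov
  set N := Fintype.card V with hN
  have hQN : Q ≠ [] := by rintro rfl; simp at hhead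
  have hNpos : 0 < N := by rw [← hlen]; exact List.length_pos_iff.2 hQN
  have hinj : Function.Injective Q.get := List.nodup_iff_injective_get.1 hnd
  set g : ℕ → V := fun i => Q.getD i u with hg
  have hgget : ∀ (i : ℕ) (h : i < Q.length), g i = Q.get ⟨i, h⟩ := fun i h =>
    List.getD_eq_get Q u ⟨i, h⟩
  have h0 : g 0 = u := by
    rw [hgget 0 (by omega), ← Option.some.inj ((head?_eq_get Q hQN).symm.trans hhead)]
  have hNlastlt : N - 1 < Q.length := by omega
  have hNlast : g (N - 1) = v := by
    have h2 : Q.getLast hQN = v := getLast_of_getLast? hQN hlast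
    rw [hgget _ hNlastlt, ← h2, List.getLast_eq_getElem]
    simp only [List.get_eq_getElem]
    congr 1
    omega
  set A := (Finset.range (N - 1)).filter (fun i => H.Adj u (g (i + 1))) with hA
  set B := (Finset.range (N - 1)).filter (fun i => H.Adj v (g i)) with hB
  have hidx : ∀ x : V, x ∈ Q → Q.idxOf x < Q.length := fun x hx =>
    List.idxOf_lt_length_iff.2 hx
  have hgidx : ∀ x : V, (hx : x ∈ Q) → g (Q.idxOf x) = x := by
    intro x hx
    rw [hgget _ (hidx x hx)]
    exact List.idxOf_get _
  have hne0 : ∀ x : V, H.Adj u x → Q.idxOf x ≠ 0 := by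
    intro x hx h0'
    have : g 0 = x := by rw [← h0']; exact hgidx x (hcov x)
    rw [h0] at this
    exact (H.ne_of_adj hx) this
  have hneN : ∀ x : V, H.Adj v x → Q.idxOf x ≠ N - 1 := by
    intro x hx h0'
    have : g (N - 1) = x := by rw [← h0']; exact hgidx x (hcov x)
    rw [hNlast] at this
    exact (H.ne_of_adj hx) this
  have hAcard : H.degree u ≤ A.card := by
    refine Finset.card_le_card_of_injOn (fun x => Q.idxOf x - 1) ?_ ?_
    · intro x hx
      rw [Finset.mem_coe, SimpleGraph.mem_neighborFinset] at hx
      have hix := hidx x (hcov x)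
      have hx0 := hne0 x hx
      rw [Finset.mem_coe, hA, Finset.mem_filter, Finset.mem_range]
      refine ⟨?_, ?_⟩
      · show Q.idxOf x - 1 < N - 1
        omega
      · have he : Q.idxOf x - 1 + 1 = Q.idxOf x := by omega
        show H.Adj u (g (Q.idxOf x - 1 + 1))
        rw [he, hgidx x (hcov x)]
        exact hx
    · intro x hx y hy hxy
      simp only [Finset.coe_sort_coe, Finset.mem_coe, SimpleGraph.mem_neighborFinset] at hx hy
      have hx0 := hne0 x hx
      have hy0 := hne0 y hy
      simp only at hxy
      have : Q.idxOf x = Q.idxOf y := by omega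
      exact (List.idxOf_inj (hcov x)).1 this
  have hBcard : H.degree v ≤ B.card := by
    refine Finset.card_le_card_of_injOn (fun x => Q.idxOf x) ?_ ?_
    · intro x hx
      rw [Finset.mem_coe, SimpleGraph.mem_neighborFinset] at hx
      have hix := hidx x (hcov x)
      have hxN := hneN x hx
      rw [Finset.mem_coe, hB, Finset.mem_filter, Finset.mem_range]
      refine ⟨?_, ?_⟩
      · show Q.idxOf x < N - 1
        omega
      · show H.Adj v (g (Q.idxOf x))
        rw [hgidx x (hcov x)]
        exact hx
    · intro x hx y hy hxy
      simp only at hxy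
      exact (List.idxOf_inj (hcov x)).1 hxy
  have hU : (A ∪ B).card ≤ N - 1 := by
    have hsub : A ∪ B ⊆ Finset.range (N - 1) := by
      apply Finset.union_subset <;> exact Finset.filter_subset _ _
    calc (A ∪ B).card ≤ (Finset.range (N - 1)).card := Finset.card_le_card hsub
    _ = N - 1 := Finset.card_range _
  have hABcard := Finset.card_union_add_card_inter A B
  have hABpos : 0 < (A ∩ B).card := by omega
  obtain ⟨i, hi⟩ := Finset.card_pos.1 hABpos
  rw [Finset.mem_inter, hA, hB, Finset.mem_filter, Finset.mem_filter, Finset.mem_range] at hi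
  obtain ⟨⟨hilt, hiA⟩, -, hiB⟩ := hi
  have hi0 : i ≠ 0 := by
    intro h0'
    rw [h0', h0] at hiB
    exact hnadj hiB.symm
  have hiN : i + 1 ≠ N - 1 := by
    intro h0'
    rw [h0', hNlast] at hiA
    exact hnadj hiA
  have hi1lt : i + 1 < Q.length := by omega
  obtain ⟨C, hC⟩ : ∃ C : List V, C = Q.take (i + 1) ++ (Q.drop (i + 1)).reverse := ⟨_, rfl⟩
  have hCperm : C ~ Q := by
    rw [hC]
    calc Q.take (i + 1) ++ (Q.drop (i + 1)).reverse ~ Q.take (i + 1) ++ Q.drop (i + 1) :=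
      List.Perm.append_left _ (List.reverse_perm _)
    _ = Q := List.take_append_drop _ _
  have hCnd : C.Nodup := hCperm.nodup_iff.2 hnd
  have hCcov : ∀ z, z ∈ C := fun z => hCperm.mem_iff.2 (hcov z)
  have htlen : (Q.take (i + 1)).length = i + 1 := by rw [List.length_take]; omega
  have htne : Q.take (i + 1) ≠ [] := by
    intro h; rw [h] at htlen; simp at htlen
  have hdlen : (Q.drop (i + 1)).length = Q.length - (i + 1) := List.length_drop
  have hdne : Q.drop (i + 1) ≠ [] := by
    intro h; rw [h] at hdlen; simp at hdlen; omega
  have htake_last : (Q.take (i + 1)).getLast htne = g i := by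
    rw [List.getLast_eq_getElem, List.getElem_take, hgget i (by omega)]
    simp only [List.get_eq_getElem]
    congr 1
    omega
  have hdrop_last : (Q.drop (i + 1)).getLast hdne = v := by
    rw [List.getLast_eq_getElem, List.getElem_drop, ← hNlast, hgget _ hNlastlt]
    simp only [List.get_eq_getElem]
    congr 1
    omega
  have hdrop_head? : (Q.drop (i + 1)).head? = some (g (i + 1)) := by
    have hq : (Q.drop (i + 1)).get ⟨0, List.length_pos_iff.2 hdne⟩ = g (i + 1) := by
      rw [hgget _ hi1lt]
      simp
    rw [head?_eq_get _ hdne, hq]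
  have hchC : List.Chain' H.Adj C := by
    rw [hC]
    unfold List.Chain'
    rw [List.isChain_append]
    refine ⟨List.IsChain.take hch _, ?_, ?_⟩
    · rw [List.isChain_reverse]
      exact (List.IsChain.drop hch _).imp (fun a b hab => hab.symm)
    · intro x hx y hy
      rw [List.getLast?_eq_getLast htne] at hx
      rw [List.head?_reverse, List.getLast?_eq_getLast hdne] at hy
      rw [Option.mem_def] at hx hy
      have hx' : x = g i := by rw [← Option.some.inj hx, htake_last]
      have hy' : y = v := by rw [← Option.some.inj hy, hdrop_last]
      rw [hx', hy']
      exact hiB.symm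
  have hChead? : C.head? = some u := by
    rw [hC, List.head?_append, head?_eq_get _ htne]
    have : (Q.take (i + 1)).get ⟨0, List.length_pos_iff.2 htne⟩ = u := by
      rw [List.get_eq_getElem, List.getElem_take]
      rw [hgget 0 (by omega)] at h0
      rw [← h0, List.get_eq_getElem]
    rw [this]
    rfl
  have hClast? : C.getLast? = some (g (i + 1)) := by
    rw [hC, List.getLast?_append, List.getLast?_reverse, hdrop_head?]
    rfl
  obtain ⟨t, hxt⟩ : ∃ t, C = u :: t := by
    cases hCc : C with
    | nil => rw [hCc] at hChead?; simp at hChead?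
    | cons x t =>
      rw [hCc] at hChead?
      simp only [List.head?_cons, Option.some.injEq] at hChead?
      exact ⟨t, by rw [hChead?]⟩
  refine ⟨u, t, by rw [← hxt]; exact hCnd, fun z => by rw [← hxt]; exact hCcov z, ?_⟩
  have hchain : List.Chain H.Adj u t := by
    have h2 := hchC
    rw [hxt] at h2
    exact h2
  refine chain_snoc t hchain ?_
  have hlast2 : (u :: t).getLast (by simp) = g (i + 1) := by
    have := hClast?
    rw [hxt] at this
    exact getLast_of_getLast? (by simp) this
  rw [hlast2]
  exact hiA.symm


lemma head?_eq_some_iff {l : List V} {u : V} : l.head? = some u ↔ ∃ t, l = u :: t := by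
  cases l with
  | nil => simp
  | cons x t =>
    simp only [List.head?_cons, Option.some.injEq]
    constructor
    · rintro rfl; exact ⟨t, rfl⟩
    · rintro ⟨t', ht'⟩
      exact (List.cons.injEq _ _ _ _ ▸ ht').1

lemma rotate_to_head {S : SimpleGraph V} {L : List V} {u : V}
    (hnd : L.Nodup) (hcov : ∀ z, z ∈ L) (hch : CycChain S L) (hu : u ∈ L) :
    ∃ m₁, (u :: m₁).Nodup ∧ (∀ z, z ∈ u :: m₁) ∧ List.Chain S.Adj u (m₁ ++ [u]) := by
  have hk : L.idxOf u < L.length := List.idxOf_lt_length_iff.2 hu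
  have hrlen : (L.rotate (L.idxOf u)).length = L.length := List.length_rotate _ _
  have hrne : L.rotate (L.idxOf u) ≠ [] := by
    intro hh
    rw [hh] at hrlen
    simp at hrlen
    omega
  have hrhead : (L.rotate (L.idxOf u)).head? = some u := by
    rw [head?_eq_get _ hrne, List.get_rotate]
    congr 1
    have hmod : (0 + L.idxOf u) % L.length = L.idxOf u := by
      rw [Nat.zero_add]
      exact Nat.mod_eq_of_lt hk
    rw [show ((⟨(0 + L.idxOf u) % L.length, by
        exact Nat.mod_lt _ (by omega)⟩ : Fin L.length)) = ⟨L.idxOf u, hk⟩ from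
      Fin.ext hmod]
    exact List.idxOf_get _
  obtain ⟨m₁, hm₁⟩ := head?_eq_some_iff.1 hrhead
  refine ⟨m₁, ?_, ?_, ?_⟩
  · rw [← hm₁]; exact List.nodup_rotate.2 hnd
  · intro z
    rw [← hm₁]
    exact (List.rotate_perm _ _).mem_iff.2 (hcov z)
  · have := CycChain.rotate (L.idxOf u) hch
    rw [hm₁] at this
    exact this

lemma bc [Fintype V] (H : SimpleGraph V) [DecidableRel H.Adj] {u v : V}
    (hne : u ≠ v) (hnadj : ¬H.Adj u v) (h3 : 3 ≤ Fintype.card V)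
    (hdeg : Fintype.card V ≤ H.degree u + H.degree v)
    (h : HamCycL (H ⊔ SimpleGraph.fromEdgeSet {s(u, v)})) : HamCycL H := by
  classical
  obtain ⟨a, m, hnd, hcov, hch⟩ := h
  obtain ⟨m₁, hnd1, hcov1, hch1⟩ := rotate_to_head (S := H ⊔ SimpleGraph.fromEdgeSet {s(u, v)})
    hnd hcov (by exact hch) (hcov u)
  have hlen1 : (u :: m₁).length = Fintype.card V := length_eq_card hnd1 hcov1
  by_cases hc1 : m₁.getLast? = some v
  · have hm₁ne : m₁ ≠ [] := by intro hh; rw [hh] at hc1; simp at hc1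
    have hQlast : (u :: m₁).getLast? = some v := by
      cases m₁ with
      | nil => exact absurd rfl hm₁ne
      | cons x t => rw [List.getLast?_cons_cons]; exact hc1
    have hchQ : List.Chain' H.Adj (u :: m₁) := by
      apply transfer_path H hnd1 (by omega) rfl hQlast
      exact chain_init _ hch1
    exact crossover H hnadj hnd1 hcov1 hchQ rfl hQlast hdeg
  · by_cases hc2 : m₁.head? = some v
    · obtain ⟨m₂, hm₂⟩ := head?_eq_some_iff.1 hc2
      have hperm : (u :: m₁) ~ (m₁ ++ [u]) := List.perm_append_comm (l₁ := [u]) (l₂ := m₁)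
      have hndQ : (m₁ ++ [u]).Nodup := hperm.nodup_iff.1 hnd1
      have hcovQ : ∀ z, z ∈ m₁ ++ [u] := fun z => hperm.mem_iff.1 (hcov1 z)
      have hchQS : List.Chain (H ⊔ SimpleGraph.fromEdgeSet {s(u, v)}).Adj v (m₂ ++ [u]) := by
        rw [hm₂] at hch1
        exact (List.chain_cons.1 hch1).2
      have hQlen : (m₁ ++ [u]).length = Fintype.card V := by
        rw [← hperm.length_eq]
        exact hlen1
      have hheadQ : (m₁ ++ [u]).head? = some v := by rw [hm₂]; rfl
      have hlastQ : (m₁ ++ [u]).getLast? = some u := List.getLast?_concat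
      have hchQ : List.Chain' H.Adj (m₁ ++ [u]) := by
        apply transfer_path (u := v) (v := u) H hndQ (by omega) hheadQ hlastQ
        rw [Sym2.eq_swap]
        rw [hm₂]
        exact hchQS
      exact crossover H (fun hh => hnadj hh.symm) hndQ hcovQ hchQ hheadQ hlastQ
        (by rw [Nat.add_comm]; exact hdeg)
    · exact ⟨u, m₁, hnd1, hcov1, transfer_cyc H hne hnd1 hc2 hc1 hch1⟩

lemma degree_mono [Fintype V] {H H' : SimpleGraph V} [DecidableRel H.Adj]
    [DecidableRel H'.Adj] (hle : H ≤ H') (x : V) :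
    H.degree x ≤ H'.degree x := by
  apply Finset.card_le_card
  intro z hz
  rw [SimpleGraph.mem_neighborFinset] at hz ⊢
  exact hle hz

def KW (W : Finset V) : SimpleGraph V := SimpleGraph.fromRel (fun x y => x ∈ W ∧ y ∈ W)

lemma kw_adj {W : Finset V} {x y : V} : (KW W).Adj x y ↔ x ≠ y ∧ x ∈ W ∧ y ∈ W := by
  unfold KW
  rw [SimpleGraph.fromRel_adj]
  tauto

lemma closure_base [Fintype V] (W : Finset V) (H : SimpleGraph V) (inst : DecidableRel H.Adj)
    (hcard : ((W ×ˢ W).filter (fun p => p.1 ≠ p.2 ∧ ¬H.Adj p.1 p.2)).card = 0)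
    (hham : HamCycL (H ⊔ KW W)) : HamCycL H := by
  have hAdj : ∀ x y, x ∈ W → y ∈ W → x ≠ y → H.Adj x y := by
    intro x y hx hy hxy
    by_contra hn
    have : ((x, y) : V × V) ∈ (W ×ˢ W).filter (fun p => p.1 ≠ p.2 ∧ ¬H.Adj p.1 p.2) := by
      rw [Finset.mem_filter, Finset.mem_product]
      exact ⟨⟨hx, hy⟩, hxy, hn⟩
    rw [Finset.card_eq_zero] at hcard
    rw [hcard] at this
    simp at this
  have hKW : KW W ≤ H := by
    intro a b hab
    rw [kw_adj] at hab
    exact hAdj a b hab.2.1 hab.2.2 hab.1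
  rwa [sup_eq_left.2 hKW] at hham

lemma closure [Fintype V] (W : Finset V) (h3 : 3 ≤ Fintype.card V) :
    ∀ (k : ℕ) (H : SimpleGraph V) (inst : DecidableRel H.Adj),
    (((W ×ˢ W).filter (fun p => p.1 ≠ p.2 ∧ ¬H.Adj p.1 p.2)).card ≤ k) →
    (∀ x y, x ∈ W → y ∈ W → x ≠ y → ¬H.Adj x y →
      Fintype.card V ≤ H.degree x + H.degree y) →
    HamCycL (H ⊔ KW W) → HamCycL H := by
  intro k
  induction k with
  | zero =>
    intro H inst hcard hdeg hham
    exact closure_base W H inst (by omega) hham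
  | succ k ih =>
    intro H inst hcard hdeg hham
    by_cases hc : ((W ×ˢ W).filter (fun p => p.1 ≠ p.2 ∧ ¬H.Adj p.1 p.2)).card = 0
    · exact closure_base W H inst hc hham
    · obtain ⟨⟨x, y⟩, hmem⟩ := Finset.card_pos.1 (Nat.pos_of_ne_zero hc)
      rw [Finset.mem_filter, Finset.mem_product] at hmem
      obtain ⟨⟨hxW, hyW⟩, hxy, hnadj⟩ := hmem
      set H' := H ⊔ SimpleGraph.fromEdgeSet {s(x, y)} with hH'
      have instH' : DecidableRel H'.Adj := fun a b =>
        decidable_of_iff (H.Adj a b ∨ (s(a, b) = s(x, y) ∧ a ≠ b)) (by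
          rw [hH', SimpleGraph.sup_adj, SimpleGraph.fromEdgeSet_adj, Set.mem_singleton_iff])
      have hle : H ≤ H' := le_sup_left
      have hH'xy : H'.Adj x y := by
        rw [hH', SimpleGraph.sup_adj, SimpleGraph.fromEdgeSet_adj]
        exact Or.inr ⟨rfl, hxy⟩
      have hss : ((W ×ˢ W).filter (fun p => p.1 ≠ p.2 ∧ ¬H'.Adj p.1 p.2)) ⊂
          ((W ×ˢ W).filter (fun p => p.1 ≠ p.2 ∧ ¬H.Adj p.1 p.2)) := by
        constructor
        · intro p hp
          rw [Finset.mem_filter] at hp ⊢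
          exact ⟨hp.1, hp.2.1, fun hh => hp.2.2 (hle hh)⟩
        · intro hsub
          have : ((x, y) : V × V) ∈ (W ×ˢ W).filter (fun p => p.1 ≠ p.2 ∧ ¬H.Adj p.1 p.2) := by
            rw [Finset.mem_filter, Finset.mem_product]
            exact ⟨⟨hxW, hyW⟩, hxy, hnadj⟩
          have h2 := hsub this
          rw [Finset.mem_filter] at h2
          exact h2.2.2 hH'xy
      have hcard' : ((W ×ˢ W).filter (fun p => p.1 ≠ p.2 ∧ ¬H'.Adj p.1 p.2)).card ≤ k := by
        have := Finset.card_lt_card hss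
        omega
      have hdeg' : ∀ a b, a ∈ W → b ∈ W → a ≠ b → ¬H'.Adj a b →
          Fintype.card V ≤ H'.degree a + H'.degree b := by
        intro a b ha hb hab hnadj'
        have h1 : ¬H.Adj a b := fun hh => hnadj' (hle hh)
        have h2 := hdeg a b ha hb hab h1
        letI := inst
        letI := instH'
        have h3a := degree_mono hle a
        have h3b := degree_mono hle b
        omega
      have hsupeq : H' ⊔ KW W = H ⊔ KW W := by
        rw [hH', sup_assoc]
        congr 1
        apply sup_eq_right.2
        intro a b hab
        rw [SimpleGraph.fromEdgeSet_adj, Set.mem_singleton_iff, Sym2.eq_iff] at hab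
        rw [kw_adj]
        rcases hab with ⟨hmem2, hne2⟩
        refine ⟨hne2, ?_⟩
        rcases hmem2 with ⟨rfl, rfl⟩ | ⟨rfl, rfl⟩
        · exact ⟨hxW, hyW⟩
        · exact ⟨hyW, hxW⟩
      have hham' : HamCycL (H' ⊔ KW W) := by rwa [hsupeq]
      have hH'ham : HamCycL H' := ih H' instH' hcard' hdeg' hham'
      exact bc H hxy hnadj h3 (hdeg x y hxW hyW hxy hnadj) hH'ham

lemma chain_ne_of_nodup {α : Type*} : ∀ (l : List α) (x : α),
    (x :: l).Nodup → List.Chain (· ≠ ·) x l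
  | [], x, _ => List.Chain.nil
  | y :: l, x, h => by
    simp only [List.nodup_cons, List.mem_cons] at h
    refine List.chain_cons.2 ⟨fun hh => h.1 (Or.inl hh), ?_⟩
    apply chain_ne_of_nodup
    simp only [List.nodup_cons]
    exact ⟨h.2.1, h.2.2⟩

lemma all_some {α : Type*} : ∀ (l : List (Option α)), (∀ z ∈ l, z ≠ none) →
    ∃ m : List α, l = m.map some
  | [], _ => ⟨[], rfl⟩
  | z :: l, h => by
    obtain ⟨m, hm⟩ := all_some l (fun w hw => h w (List.mem_cons_of_mem _ hw))
    cases z with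
    | none => exact absurd rfl (h none (List.mem_cons_self))
    | some u => exact ⟨u :: m, by rw [hm]; rfl⟩

section HP

variable {Vt : Type*} [Fintype Vt] [DecidableEq Vt]

def hatr (Ht : SimpleGraph Vt) (x y : Vt) : Option Vt → Option Vt → Prop
  | some u, some v => Ht.Adj u v
  | none, some v => v = x ∨ v = y
  | _, _ => False

def hat (Ht : SimpleGraph Vt) (x y : Vt) : SimpleGraph (Option Vt) :=
  SimpleGraph.fromRel (hatr Ht x y)

lemma hat_some_some {Ht : SimpleGraph Vt} {x y u v : Vt} :
    (hat Ht x y).Adj (some u) (some v) ↔ Ht.Adj u v := by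
  unfold hat
  rw [SimpleGraph.fromRel_adj]
  constructor
  · rintro ⟨hne, h | h⟩
    · exact h
    · exact (show Ht.Adj v u from h).symm
  · intro h
    refine ⟨?_, Or.inl h⟩
    simp only [ne_eq, Option.some.injEq]
    exact Ht.ne_of_adj h
  
lemma hat_none_some {Ht : SimpleGraph Vt} {x y v : Vt} :
    (hat Ht x y).Adj none (some v) ↔ v = x ∨ v = y := by
  unfold hat
  rw [SimpleGraph.fromRel_adj]
  constructor
  · rintro ⟨hne, h | h⟩
    · exact h
    · exact absurd h (by simp [hatr])
  · intro h
    exact ⟨by simp, Or.inl h⟩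

lemma hat_chain_tail {Ht : SimpleGraph Vt} {x y : Vt} : ∀ (l : List Vt) (p : Vt),
    List.Chain (hat Ht x y).Adj (some p) (l.map some ++ [none]) →
    List.Chain Ht.Adj p l ∧
      ((p :: l).getLast (by simp) = x ∨ (p :: l).getLast (by simp) = y)
  | [], p, h => by
    rcases List.chain_cons.1 h with ⟨h1, -⟩
    refine ⟨List.Chain.nil, ?_⟩
    have h2 : (hat Ht x y).Adj none (some p) := h1.symm
    rw [hat_none_some] at h2
    simpa using h2
  | z :: l, p, h => by
    rcases List.chain_cons.1 h with ⟨h1, h2⟩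
    obtain ⟨hc, hl⟩ := hat_chain_tail (l) z h2
    refine ⟨List.chain_cons.2 ⟨hat_some_some.1 h1, hc⟩, ?_⟩
    rwa [List.getLast_cons (by simp)]

theorem hp (Ht : SimpleGraph Vt) [DecidableRel Ht.Adj]
    (hdeg : ∀ w, Fintype.card Vt + 1 ≤ 2 * Ht.degree w) (x y : Vt) (hxy : x ≠ y) :
    ∃ (w₁ w₂ : Vt) (l : List Vt), ((w₁ = x ∧ w₂ = y) ∨ (w₁ = y ∧ w₂ = x)) ∧
      List.Chain Ht.Adj w₁ (l ++ [w₂]) ∧ (w₁ :: (l ++ [w₂])).Nodup ∧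
      (∀ v, v ∈ w₁ :: (l ++ [w₂])) := by
  classical
  letI instHat : DecidableRel (hat Ht x y).Adj := Classical.decRel _
  have hm2 : 2 ≤ Fintype.card Vt := Fintype.one_lt_card_iff_nontrivial.2 ⟨⟨x, y, hxy⟩⟩
  have hcardO : Fintype.card (Option Vt) = Fintype.card Vt + 1 := Fintype.card_option
  obtain ⟨W, hWdef⟩ : ∃ W : Finset (Option Vt), W = Finset.univ.filter (fun p => p.isSome) :=
    ⟨_, rfl⟩
  have hWmem : ∀ (u : Vt), some u ∈ W := by
    intro u; rw [hWdef]; simp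
  have hdeghat : ∀ u : Vt, Ht.degree u ≤ (hat Ht x y).degree (some u) := by
    intro u
    refine Finset.card_le_card_of_injOn some ?_ ?_
    · intro z hz
      rw [Finset.mem_coe, SimpleGraph.mem_neighborFinset] at hz
      rw [Finset.mem_coe, SimpleGraph.mem_neighborFinset]
      exact hat_some_some.2 hz
    · intro p _ q _ h
      exact Option.some.inj h
  -- the trivial hamiltonian cycle in hat ⊔ KW W
  have hham0 : HamCycL ((hat Ht x y) ⊔ KW W) := by
    obtain ⟨r0, hr0⟩ : ∃ r0 : List Vt, r0 = ((Finset.univ.erase x).erase y).toList := ⟨_, rfl⟩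
    have hr0nd : r0.Nodup := by rw [hr0]; exact Finset.nodup_toList _
    have hr0mem : ∀ z : Vt, z ∈ r0 ↔ (z ≠ y ∧ z ≠ x) := by
      intro z
      rw [hr0]
      simp [Finset.mem_toList, Finset.mem_erase]
    have hxr0 : x ∉ r0 := fun h => ((hr0mem x).1 h).2 rfl
    have hyr0 : y ∉ r0 := fun h => ((hr0mem y).1 h).1 rfl
    have hnd0 : (x :: (r0 ++ [y])).Nodup := by
      rw [List.nodup_cons]
      constructor
      · intro h
        rcases List.mem_append.1 h with h | h
        · exact hxr0 h
        · exact hxy (by simpa using h)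
      · rw [List.nodup_append]
        refine ⟨hr0nd, List.nodup_singleton y, ?_⟩
        intro a ha b hb hab
        rw [List.mem_singleton] at hb
        rw [hab, hb] at ha
        exact hyr0 ha
    have hchainne : List.Chain (· ≠ ·) x (r0 ++ [y]) := by
      apply chain_ne_of_nodup
      exact hnd0
    have hchainKW : List.Chain (KW W).Adj (some x) ((r0 ++ [y]).map some) := by
      refine (List.isChain_cons_map (b := x) some).2 ?_
      apply List.Chain.imp ?_ hchainne
      intro a b hab
      rw [kw_adj]
      exact ⟨by simpa using hab, hWmem a, hWmem b⟩
    refine ⟨none, some x :: (r0.map some ++ [some y]), ?_, ?_, ?_⟩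
    · have hndmap : ((x :: (r0 ++ [y])).map some).Nodup :=
        hnd0.map (Option.some_injective _)
      have heq : (x :: (r0 ++ [y])).map some = some x :: (r0.map some ++ [some y]) := by
        simp
      rw [heq] at hndmap
      rw [List.nodup_cons]
      refine ⟨?_, hndmap⟩
      intro h
      rcases List.mem_cons.1 h with h | h
      · simp at h
      · rcases List.mem_append.1 h with h | h
        · obtain ⟨u, -, he⟩ := List.mem_map.1 h
          simp at he
        · simp at h
    · intro z
      cases z with
      | none => exact List.mem_cons_self
      | some u =>
        by_cases hux : u = x
        · subst hux
          exact List.mem_cons_of_mem _ (List.mem_cons_self)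
        · by_cases huy : u = y
          · subst huy
            refine List.mem_cons_of_mem _ (List.mem_cons_of_mem _ ?_)
            simp
          · refine List.mem_cons_of_mem _ (List.mem_cons_of_mem _ ?_)
            apply List.mem_append.2
            left
            exact List.mem_map.2 ⟨u, (hr0mem u).2 ⟨huy, hux⟩, rfl⟩
    · refine List.chain_cons.2 ⟨?_, ?_⟩
      · apply SimpleGraph.sup_adj _ _ _ _ |>.2
        left
        exact hat_none_some.2 (Or.inl rfl)
      · have hch2 : List.Chain ((hat Ht x y) ⊔ KW W).Adj (some x) (r0.map some ++ [some y]) := by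
          have := List.Chain.imp
            (S := ((hat Ht x y) ⊔ KW W).Adj)
            (fun a b hab => (SimpleGraph.sup_adj (hat Ht x y) (KW W) a b).2 (Or.inr hab))
            hchainKW
          rwa [List.map_append] at this
        have hgl? : ((some x : Option Vt) :: (r0.map some ++ [some y])).getLast? =
            some (some y) := by
          rw [show ((some x : Option Vt) :: (r0.map some ++ [some y])) =
            ((some x :: r0.map some) ++ [some y]) from by simp]
          exact List.getLast?_concat
        have hgl := getLast_of_getLast? (by simp) hgl?
        have := chain_snoc (b := (none : Option Vt)) _ hch2 (by
          rw [hgl]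
          apply (SimpleGraph.sup_adj _ _ _ _).2
          left
          exact (hat_none_some.2 (Or.inr rfl)).symm)
        exact this
  -- apply closure
  have hham : HamCycL (hat Ht x y) := by
    apply closure W (by omega) (((W ×ˢ W).filter
      (fun p => p.1 ≠ p.2 ∧ ¬(hat Ht x y).Adj p.1 p.2)).card) (hat Ht x y) instHat le_rfl
      ?_ hham0
    intro a b ha hb hab hnadj
    rw [hWdef, Finset.mem_filter] at ha hb
    obtain ⟨u, hu⟩ := Option.isSome_iff_exists.1 ha.2
    obtain ⟨v, hv⟩ := Option.isSome_iff_exists.1 hb.2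
    subst hu hv
    have h1 := hdeg u
    have h2 := hdeg v
    have h3 := hdeghat u
    have h4 := hdeghat v
    omega
  -- extract
  obtain ⟨a0, m0, hnd0, hcov0, hch0⟩ := hham
  obtain ⟨m', hnd', hcov', hch'⟩ := rotate_to_head (S := hat Ht x y) hnd0 hcov0
    (by exact hch0) (hcov0 none)
  have hnone : (none : Option Vt) ∉ m' := by
    have := hnd'
    simp only [List.nodup_cons] at this
    exact this.1
  obtain ⟨ml, hml⟩ := all_some m' (fun z hz hzn => hnone (hzn ▸ hz))
  have hmllen : ml.length = Fintype.card Vt := by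
    have h1 : (none :: m').length = Fintype.card (Option Vt) := length_eq_card hnd' hcov'
    rw [hcardO] at h1
    simp only [List.length_cons] at h1
    have : m'.length = Fintype.card Vt := by omega
    rw [hml] at this
    simpa using this
  obtain ⟨q, mlt, hqm⟩ : ∃ q mlt, ml = q :: mlt := by
    cases hc : ml with
    | nil => rw [hc] at hmllen; simp at hmllen; omega
    | cons q t => exact ⟨q, t, rfl⟩
  have hch'' : (hat Ht x y).Adj none (some q) ∧
      List.Chain (hat Ht x y).Adj (some q) (mlt.map some ++ [none]) := by
    rw [hml, hqm] at hch'
    exact List.chain_cons.1 hch'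
  have hq : q = x ∨ q = y := hat_none_some.1 hch''.1
  obtain ⟨hchq, hlastq⟩ := hat_chain_tail mlt q hch''.2
  -- basic facts about ml
  have hmlnd : ml.Nodup := by
    have h1 : m'.Nodup := (List.nodup_cons.1 hnd').2
    rw [hml] at h1
    exact h1.of_map
  have hmlcov : ∀ u : Vt, u ∈ ml := by
    intro u
    have h1 : some u ∈ none :: m' := hcov' (some u)
    rcases List.mem_cons.1 h1 with h | h
    · exact absurd h (by simp)
    · rw [hml] at h
      obtain ⟨w, hw, he⟩ := List.mem_map.1 h
      exact (Option.some.inj he) ▸ hw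
  have hmltne : mlt ≠ [] := by
    intro hh
    rw [hqm, hh] at hmllen
    simp at hmllen
    omega
  have hlast_eq : (q :: mlt).getLast (by simp) = mlt.getLast hmltne :=
    List.getLast_cons hmltne
  have hqlast : q ≠ mlt.getLast hmltne := by
    intro hh
    have h1 : mlt.getLast hmltne ∈ mlt := List.getLast_mem hmltne
    have h2 : q ∉ mlt := by
      have := hmlnd
      rw [hqm, List.nodup_cons] at this
      exact this.1
    exact h2 (hh ▸ h1)
  -- assemble
  refine ⟨q, mlt.getLast hmltne, mlt.dropLast, ?_, ?_, ?_, ?_⟩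
  · rw [hlast_eq] at hlastq
    rcases hq with rfl | rfl
    · rcases hlastq with h | h
      · exact absurd h.symm hqlast
      · exact Or.inl ⟨rfl, h⟩
    · rcases hlastq with h | h
      · exact Or.inr ⟨rfl, h⟩
      · exact absurd h.symm hqlast
  · rwa [List.dropLast_append_getLast hmltne]
  · have : (q :: mlt).Nodup := hqm ▸ hmlnd
    rwa [← List.dropLast_append_getLast hmltne] at this
  · intro u
    have : u ∈ ml := hmlcov u
    rw [hqm, ← List.dropLast_append_getLast hmltne] at this
    exact this

end HP

lemma hp_subset [Fintype V] (G : SimpleGraph V) [DecidableRel G.Adj] (s : Finset V)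
    {x y : V} (hx : x ∈ s) (hy : y ∈ s) (hxy : x ≠ y)
    (hdeg : ∀ v ∈ s, s.card + 1 ≤ 2 * (s.filter (G.Adj v)).card) :
    ∃ (w₁ w₂ : V) (l : List V), ((w₁ = x ∧ w₂ = y) ∨ (w₁ = y ∧ w₂ = x)) ∧
      List.Chain G.Adj w₁ (l ++ [w₂]) ∧ (w₁ :: (l ++ [w₂])).Nodup ∧
      (∀ v, v ∈ w₁ :: (l ++ [w₂]) ↔ v ∈ s) := by
  classical
  set Ht : SimpleGraph {v // v ∈ s} := SimpleGraph.comap Subtype.val G with hHt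
  letI instHt : DecidableRel Ht.Adj := fun a b => by
    rw [hHt, SimpleGraph.comap_adj]
    infer_instance
  have hdegHt : ∀ u : {v // v ∈ s}, Ht.degree u = (s.filter (G.Adj u.val)).card := by
    intro u
    rw [SimpleGraph.degree, SimpleGraph.neighborFinset_eq_filter]
    apply Finset.card_bij (fun (a : {v // v ∈ s}) _ => a.val)
    · intro a ha
      rw [Finset.mem_filter] at ha
      rw [Finset.mem_filter]
      refine ⟨a.property, ?_⟩
      have := ha.2
      rw [hHt, SimpleGraph.comap_adj] at this
      exact this
    · intro a _ b _ h
      exact Subtype.ext h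
    · intro b hb
      rw [Finset.mem_filter] at hb
      refine ⟨⟨b, hb.1⟩, ?_, rfl⟩
      rw [Finset.mem_filter]
      refine ⟨Finset.mem_univ _, ?_⟩
      rw [hHt, SimpleGraph.comap_adj]
      exact hb.2
  have hcardVt : Fintype.card {v // v ∈ s} = s.card := Fintype.card_coe s
  have hdeg' : ∀ w : {v // v ∈ s}, Fintype.card {v // v ∈ s} + 1 ≤ 2 * Ht.degree w := by
    intro w
    rw [hcardVt, hdegHt]
    exact hdeg w.val w.property
  obtain ⟨w₁', w₂', l', hperm, hch, hnd, hcov⟩ := hp Ht hdeg' ⟨x, hx⟩ ⟨y, hy⟩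
    (fun h => hxy (congrArg Subtype.val h))
  refine ⟨w₁'.val, w₂'.val, l'.map Subtype.val, ?_, ?_, ?_, ?_⟩
  · rcases hperm with ⟨h1, h2⟩ | ⟨h1, h2⟩
    · exact Or.inl ⟨by rw [h1], by rw [h2]⟩
    · exact Or.inr ⟨by rw [h1], by rw [h2]⟩
  · have h2 : List.Chain (fun a b : {v // v ∈ s} => G.Adj a.val b.val) w₁' (l' ++ [w₂']) := by
      apply List.Chain.imp ?_ hch
      intro a b hab
      rw [hHt, SimpleGraph.comap_adj] at hab
      exact hab
    have h3 := (List.isChain_cons_map (R := G.Adj) Subtype.val).2 h2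
    rwa [List.map_append] at h3
  · have h2 := hnd.map Subtype.val_injective
    simp only [List.map_cons, List.map_append] at h2
    simpa using h2
  · intro v
    constructor
    · intro hv
      have : v ∈ (w₁' :: (l' ++ [w₂'])).map Subtype.val := by
        simp only [List.map_cons, List.map_append]
        simpa using hv
      obtain ⟨u, -, he⟩ := List.mem_map.1 this
      exact he ▸ u.property
    · intro hv
      have h1 := hcov ⟨v, hv⟩
      have : v ∈ (w₁' :: (l' ++ [w₂'])).map Subtype.val :=
        List.mem_map.2 ⟨⟨v, hv⟩, h1, rfl⟩
      simp only [List.map_cons, List.map_append] at this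
      simpa using this

@[simp] lemma mkWalk_cons (G : SimpleGraph V) (a b x : V) (l : List V)
    (h : List.Chain G.Adj a ((x :: l) ++ [b])) :
    mkWalk G a b (x :: l) h = SimpleGraph.Walk.cons (List.chain_cons.mp h).1
      (mkWalk G x b l (List.chain_cons.mp h).2) := rfl

lemma isHamCyc_mkWalk [Fintype V] {G : SimpleGraph V} {a : V} {l : List V}
    (h : List.Chain G.Adj a (l ++ [a])) (h2 : 2 ≤ l.length)
    (hnd : (a :: l).Nodup) (hcov : ∀ v, v ∈ a :: l) :
    (mkWalk G a a l h).IsHamiltonianCycle := by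
  cases l with
  | nil => simp at h2
  | cons x xs =>
  have hxsne : xs ≠ [] := by
    intro hh
    rw [hh] at h2
    simp at h2
  rw [mkWalk_cons]
  have hsupq : (mkWalk G x a xs (List.chain_cons.mp h).2).support = x :: (xs ++ [a]) :=
    support_mkWalk G x a xs _
  have hperm : (a :: x :: xs) ~ (x :: (xs ++ [a])) := by
    have h1 : (a :: x :: xs) = [a] ++ (x :: xs) := rfl
    have h2' : (x :: (xs ++ [a])) = (x :: xs) ++ [a] := by simp
    rw [h1, h2']
    exact List.perm_append_comm
  have hndLL : (x :: (xs ++ [a])).Nodup := hperm.nodup_iff.1 hnd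
  have hq : (mkWalk G x a xs (List.chain_cons.mp h).2).IsPath := by
    rw [SimpleGraph.Walk.isPath_def, hsupq]
    exact hndLL
  have haxs : a ∉ x :: xs := (List.nodup_cons.1 hnd).1
  have hedge : s(a, x) ∉ (mkWalk G x a xs (List.chain_cons.mp h).2).edges := by
    erw [edges_mkWalk]
    intro hmem
    obtain ⟨u, v, L₁, L₂, hdecomp, hs⟩ := mem_eList hmem
    rw [Sym2.eq_iff] at hs
    rcases hs with ⟨rfl, rfl⟩ | ⟨rfl, rfl⟩
    · -- LL = L₁ ++ a :: x :: L₂, but a is the last element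
      have hnd2 : (a :: x :: L₂).Nodup := by
        rw [hdecomp] at hndLL
        exact hndLL.of_append_right
      have hanotin : a ∉ x :: L₂ := (List.nodup_cons.1 hnd2).1
      have hL1 : (x :: (xs ++ [a])).getLast? = some a := by
        have hsh : (x :: (xs ++ [a])) = (x :: xs) ++ [a] := by simp
        rw [hsh]
        exact List.getLast?_concat
      rw [hdecomp, List.getLast?_append] at hL1
      have hg0 : (a :: x :: L₂).getLast? = some ((a :: x :: L₂).getLast (by simp)) :=
        List.getLast?_eq_getLast (by simp)
      rw [hg0] at hL1
      have hgeq : (a :: x :: L₂).getLast (by simp) = a := by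
        have := hL1
        simp only [Option.some_or] at this
        exact Option.some.inj this
      have hmem2 : (a :: x :: L₂).getLast (by simp) ∈ x :: L₂ := by
        rw [List.getLast_cons (by simp)]
        exact List.getLast_mem _
      rw [hgeq] at hmem2
      exact hanotin hmem2
    · -- LL = L₁ ++ x :: a :: L₂, but x is the head
      cases L₁ with
      | nil =>
        simp only [List.nil_append] at hdecomp
        have h3 : xs ++ [a] = a :: L₂ := by
          have := hdecomp
          rw [List.cons.injEq] at this
          exact this.2
        obtain ⟨w, xs', rfl⟩ : ∃ w xs', xs = w :: xs' := by
          cases xs with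
          | nil => exact absurd rfl hxsne
          | cons w t => exact ⟨w, t, rfl⟩
        have hwa : w = a := by
          have := congrArg List.head? h3
          simpa using this
        exact haxs (List.mem_cons_of_mem _ (hwa ▸ List.mem_cons_self))
      | cons z L₁' =>
        have hz : z = x := by
          have := congrArg List.head? hdecomp
          exact (by simpa using this : x = z).symm
        rw [hz] at hdecomp
        have hxno : x ∉ L₁' ++ x :: a :: L₂ := by
          have := hndLL
          rw [hdecomp] at this
          simp only [List.cons_append] at this
          rw [List.nodup_cons] at this
          exact this.1
        exact hxno (List.mem_append.2 (Or.inr (List.mem_cons_self)))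
  refine ⟨?_, ?_⟩
  · exact (SimpleGraph.Walk.cons_isCycle_iff _ _).2 ⟨hq, hedge⟩
  · rw [SimpleGraph.Walk.tail_cons]
    apply SimpleGraph.Walk.IsPath.isHamiltonian_of_mem
    · erw [SimpleGraph.Walk.isPath_copy]
      exact hq
    · intro w
      erw [SimpleGraph.Walk.support_copy, hsupq]
      exact hperm.mem_iff.1 (hcov w)

lemma filter_fin2 (χ : Sym2 V → Fin 2) : ∀ (L : List (Sym2 V)),
    (L.filter (fun e => χ e = (0 : Fin 2))).length +
    (L.filter (fun e => χ e = (1 : Fin 2))).length = L.length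
  | [] => rfl
  | e :: L => by
    have ih := filter_fin2 χ L
    by_cases h0 : χ e = 0
    · have h1 : ¬ (χ e = 1) := by omega
      simp [List.filter_cons, h0, h1]
      omega
    · have h1 : χ e = 1 := by omega
      simp [List.filter_cons, h0, h1]
      omega

lemma cycle_count1 (p : Sym2 V → Bool) (a c w₁ w₂ : V) (l M : List V) :
    List.countP p (eList (a :: (w₁ :: (l ++ (w₂ :: (c :: (M ++ [a]))))))) =
      List.countP p [s(a, w₁), s(w₂, c)] + List.countP p (eList (w₁ :: l ++ [w₂])) +
      List.countP p (eList (c :: (M ++ [a]))) := by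
  rw [eList_cons_cons, eList_split w₁ w₂ l (c :: (M ++ [a])), eList_cons_cons]
  simp only [List.countP_append, List.countP_cons, List.countP_nil]
  omega

lemma cycle_count2 (p : Sym2 V → Bool) (a c w₁ w₂ : V) (l M : List V) :
    List.countP p (eList (a :: (M ++ (c :: (w₁ :: (l ++ (w₂ :: [a]))))))) =
      List.countP p [s(c, w₁), s(w₂, a)] + List.countP p (eList (w₁ :: l ++ [w₂])) +
      List.countP p (eList (a :: M ++ [c])) := by
  rw [eList_split a c M (w₁ :: (l ++ (w₂ :: [a]))), eList_cons_cons,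
    eList_split w₁ w₂ l [a], eList_cons_cons]
  simp only [List.countP_append, List.countP_cons, List.countP_nil, eList_single]
  omega

lemma assemble [Fintype V] (G : SimpleGraph V) [DecidableRel G.Adj]
    (hcard : 6 ≤ Fintype.card V) (heven : Even (Fintype.card V))
    (hdeg : ∀ v, Fintype.card V / 2 + 2 ≤ G.degree v)
    (a b c d : V) (hab' : a ≠ b) (hac : a ≠ c) (had : a ≠ d) (hbc' : b ≠ c)
    (hbd : b ≠ d) (hcd' : c ≠ d)
    (hab : G.Adj a b) (hbc : G.Adj b c) (hcd : G.Adj c d) (hda : G.Adj d a)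
    (χ : Sym2 V → Fin 2)
    (M : List V)
    (hM : (M = [] ∧ G.Adj c a) ∨
      ∃ t, M = [t] ∧ G.Adj c t ∧ G.Adj t a ∧ t ≠ a ∧ t ≠ b ∧ t ≠ c ∧ t ≠ d)
    (hodd : Odd (List.countP (fun e => χ e = (0 : Fin 2))
      [s(a, b), s(b, c), s(c, d), s(d, a)])) :
    ∃ (a' : V) (w : G.Walk a' a'), w.IsHamiltonianCycle ∧
      ∀ col : Fin 2, Even ((w.edges.filter (fun e => χ e = col)).length) := by
  classical
  set n := Fintype.card V with hn
  have hn2 : n / 2 * 2 = n := Nat.div_mul_cancel heven.two_dvd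
  obtain ⟨D, hD⟩ : ∃ D : Finset V, D = M.toFinset ∪ {a, c} := ⟨_, rfl⟩
  have hDcard : D.card = M.length + 2 := by
    rcases hM with ⟨hM0, -⟩ | ⟨t, hM1, -, -, hta, -, htc, -⟩
    · rw [hD, hM0]
      simp only [List.toFinset_nil, Finset.empty_union, List.length_nil, Nat.zero_add]
      exact Finset.card_pair hac
    · rw [hD, hM1]
      simp only [List.toFinset_cons, List.toFinset_nil, LawfulSingleton.insert_empty_eq, List.length_cons,
        List.length_nil]
      rw [show ({t} : Finset V) ∪ {a, c} = insert t {a, c} from (Finset.insert_eq t _).symm]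
      rw [Finset.card_insert_of_notMem (by
        simp only [Finset.mem_insert, Finset.mem_singleton]
        push_neg
        exact ⟨hta, htc⟩)]
      rw [Finset.card_pair hac]
  have hMmem : ∀ z ∈ M, z ≠ a ∧ z ≠ b ∧ z ≠ c ∧ z ≠ d := by
    intro z hz
    rcases hM with ⟨hM0, -⟩ | ⟨t, hM1, -, -, hta, htb, htc, htd⟩
    · rw [hM0] at hz; simp at hz
    · rw [hM1] at hz
      rw [List.mem_singleton] at hz
      subst hz
      exact ⟨hta, htb, htc, htd⟩
  have hMlen : M.length ≤ 1 := by
    rcases hM with ⟨hM0, -⟩ | ⟨t, hM1, -⟩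
    · simp [hM0]
    · simp [hM1]
  obtain ⟨s, hs⟩ : ∃ s : Finset V, s = Finset.univ \ D := ⟨_, rfl⟩
  have hscard : s.card = n - D.card := by
    rw [hs, Finset.card_sdiff_of_subset (Finset.subset_univ _), Finset.card_univ]
  have hmemD : ∀ z, z ∈ D ↔ (z ∈ M ∨ z = a ∨ z = c) := by
    intro z
    rw [hD]
    simp only [Finset.mem_union, List.mem_toFinset, Finset.mem_insert, Finset.mem_singleton]
    all_goals tauto
  have hmems : ∀ z, z ∈ s ↔ ¬(z ∈ M ∨ z = a ∨ z = c) := by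
    intro z
    rw [hs, Finset.mem_sdiff]
    simp only [Finset.mem_univ, true_and]
    rw [hmemD]
  have hbs : b ∈ s := by
    rw [hmems]
    push_neg
    exact ⟨fun h => (hMmem b h).2.1 rfl, fun h => hab' h.symm, fun h => hbc' h⟩
  have hds : d ∈ s := by
    rw [hmems]
    push_neg
    exact ⟨fun h => (hMmem d h).2.2.2 rfl, fun h => had h.symm, fun h => hcd' h.symm⟩
  have hdegs : ∀ v ∈ s, s.card + 1 ≤ 2 * (s.filter (G.Adj v)).card := by
    intro v hv
    have h1 : G.neighborFinset v \ D ⊆ s.filter (G.Adj v) := by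
      intro z hz
      rw [Finset.mem_sdiff, SimpleGraph.mem_neighborFinset] at hz
      rw [Finset.mem_filter, hs, Finset.mem_sdiff]
      exact ⟨⟨Finset.mem_univ _, hz.2⟩, hz.1⟩
    have h2 := Finset.le_card_sdiff D (G.neighborFinset v)
    have h3 := Finset.card_le_card h1
    have h4 : (G.neighborFinset v).card = G.degree v := rfl
    have h5 := hdeg v
    omega
  obtain ⟨w₁, w₂, l, hperm12, hchR, hndR, hcovR⟩ := hp_subset G s hbs hds hbd hdegs
  obtain ⟨R, hR⟩ : ∃ R : List V, R = w₁ :: (l ++ [w₂]) := ⟨_, rfl⟩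
  have hRs : ∀ v, v ∈ R ↔ v ∈ s := by rw [hR]; exact hcovR
  -- the four adjacencies
  have haw₁ : G.Adj a w₁ := by
    rcases hperm12 with ⟨rfl, rfl⟩ | ⟨rfl, rfl⟩
    · exact hab
    · exact hda.symm
  have hw₂c : G.Adj w₂ c := by
    rcases hperm12 with ⟨rfl, rfl⟩ | ⟨rfl, rfl⟩
    · exact hcd.symm
    · exact hbc
  have hcw₁ : G.Adj c w₁ := by
    rcases hperm12 with ⟨rfl, rfl⟩ | ⟨rfl, rfl⟩
    · exact hbc.symm
    · exact hcd
  have hw₂a : G.Adj w₂ a := by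
    rcases hperm12 with ⟨rfl, rfl⟩ | ⟨rfl, rfl⟩
    · exact hda
    · exact hab.symm
  -- M chains
  have hMc : List.Chain G.Adj c (M ++ [a]) := by
    rcases hM with ⟨rfl, hca⟩ | ⟨t, rfl, hct, hta2, -⟩
    · exact List.isChain_pair.2 hca
    · exact List.chain_cons.2 ⟨hct, List.isChain_pair.2 hta2⟩
  have hMa : List.Chain G.Adj a (M ++ [c]) := by
    rcases hM with ⟨rfl, hca⟩ | ⟨t, rfl, hct, hta2, -⟩
    · exact List.isChain_pair.2 hca.symm
    · exact List.chain_cons.2 ⟨hta2.symm, List.isChain_pair.2 hct.symm⟩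
  -- getLast of R
  have hRlast : (w₁ :: (l ++ [w₂])).getLast (by simp) = w₂ := by
    have h1 : (w₁ :: (l ++ [w₂])) = (w₁ :: l) ++ [w₂] := by simp
    have h2 : ((w₁ :: l) ++ [w₂]).getLast? = some w₂ := List.getLast?_concat
    rw [← h1] at h2
    exact getLast_of_getLast? _ h2
  -- chains of the two cycles
  have chain1 : List.Chain G.Adj a ((R ++ (c :: M)) ++ [a]) := by
    have hsh : (R ++ (c :: M)) ++ [a] = R ++ (c :: (M ++ [a])) := by simp
    rw [hsh]
    show List.IsChain G.Adj (a :: _)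
    rw [List.isChain_cons_split]
    refine ⟨?_, hMc⟩
    rw [hR]
    rw [show (w₁ :: (l ++ [w₂])) ++ [c] = w₁ :: ((l ++ [w₂]) ++ [c]) from by simp]
    refine List.chain_cons.2 ⟨haw₁, ?_⟩
    exact chain_snoc _ hchR (by rw [hRlast]; exact hw₂c)
  have chain2 : List.Chain G.Adj a ((M ++ (c :: R)) ++ [a]) := by
    have hsh : (M ++ (c :: R)) ++ [a] = M ++ (c :: (R ++ [a])) := by simp
    rw [hsh]
    show List.IsChain G.Adj (a :: _)
    rw [List.isChain_cons_split]
    refine ⟨hMa, ?_⟩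
    rw [hR]
    rw [show (w₁ :: (l ++ [w₂])) ++ [a] = w₁ :: ((l ++ [w₂]) ++ [a]) from by simp]
    refine List.chain_cons.2 ⟨hcw₁, ?_⟩
    exact chain_snoc _ hchR (by rw [hRlast]; exact hw₂a)
  -- nodup and cover
  have hacs : a ∉ s := fun h => ((hmems a).1 h) (Or.inr (Or.inl rfl))
  have hcs : c ∉ s := fun h => ((hmems c).1 h) (Or.inr (Or.inr rfl))
  have hMs : ∀ z ∈ M, z ∉ s := fun z hz h => ((hmems z).1 h) (Or.inl hz)
  have hMnd : M.Nodup := by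
    rcases hM with ⟨hM0, -⟩ | ⟨t, hM1, -⟩
    · rw [hM0]; exact List.nodup_nil
    · rw [hM1]; exact List.nodup_singleton t
  have hcM : c ∉ M := fun h => (hMmem c h).2.2.1 rfl
  have haM : a ∉ M := fun h => (hMmem a h).1 rfl
  have hndR' : R.Nodup := by rw [hR]; exact hndR
  have nodup1 : (a :: (R ++ (c :: M))).Nodup := by
    rw [List.nodup_cons]
    constructor
    · intro h
      rcases List.mem_append.1 h with h | h
      · exact hacs ((hRs a).1 h)
      · rcases List.mem_cons.1 h with h | h
        · exact hac h
        · exact haM h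
    · rw [List.nodup_append]
      refine ⟨hndR', ?_, ?_⟩
      · rw [List.nodup_cons]
        exact ⟨hcM, hMnd⟩
      · intro z hz z' hz2 hzz'
        subst hzz'
        have hzs := (hRs z).1 hz
        rcases List.mem_cons.1 hz2 with h | h
        · exact hcs (h ▸ hzs)
        · exact hMs z h hzs
  have cover1 : ∀ v, v ∈ a :: (R ++ (c :: M)) := by
    intro v
    by_cases hv : v ∈ s
    · exact List.mem_cons_of_mem _ (List.mem_append.2 (Or.inl ((hRs v).2 hv)))
    · have h2 : v ∈ M ∨ v = a ∨ v = c := by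
        by_contra h3
        exact hv ((hmems v).2 h3)
      rcases h2 with h | h | h
      · exact List.mem_cons_of_mem _ (List.mem_append.2 (Or.inr (List.mem_cons_of_mem _ h)))
      · rw [h]; exact List.mem_cons_self
      · rw [h]
        exact List.mem_cons_of_mem _ (List.mem_append.2 (Or.inr (List.mem_cons_self)))
  have hperm21 : (a :: (M ++ (c :: R))) ~ (a :: (R ++ (c :: M))) := by
    apply List.Perm.cons
    calc M ++ (c :: R) ~ c :: (M ++ R) := List.perm_middle
    _ ~ c :: (R ++ M) := List.Perm.cons _ List.perm_append_comm
    _ ~ R ++ (c :: M) := List.perm_middle.symm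
  have nodup2 : (a :: (M ++ (c :: R))).Nodup := hperm21.nodup_iff.2 nodup1
  have cover2 : ∀ v, v ∈ a :: (M ++ (c :: R)) := fun v => hperm21.mem_iff.2 (cover1 v)
  have hlenR : 2 ≤ R.length := by rw [hR]; simp
  have hlen1 : 2 ≤ (R ++ (c :: M)).length := by
    rw [List.length_append]
    omega
  have hlen2 : 2 ≤ (M ++ (c :: R)).length := by
    rw [List.length_append]
    simp only [List.length_cons]
    omega
  -- the finishing move
  have hfinish : ∀ (l₁ : List V) (ch : List.Chain G.Adj a (l₁ ++ [a])),
      2 ≤ l₁.length → (a :: l₁).Nodup → (∀ v, v ∈ a :: l₁) →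
      Even (List.countP (fun e => χ e = (0 : Fin 2)) (eList (a :: (l₁ ++ [a])))) →
      ∃ (a' : V) (w : G.Walk a' a'), w.IsHamiltonianCycle ∧
        ∀ col : Fin 2, Even ((w.edges.filter (fun e => χ e = col)).length) := by
    intro l₁ ch hl2 hnd1 hcov1 hev
    have hham := isHamCyc_mkWalk ch hl2 hnd1 hcov1
    refine ⟨a, mkWalk G a a l₁ ch, hham, ?_⟩
    have hedges : (mkWalk G a a l₁ ch).edges = eList (a :: (l₁ ++ [a])) :=
      edges_mkWalk G a a l₁ ch
    have hev0 : Even (((mkWalk G a a l₁ ch).edges.filter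
        (fun e => χ e = (0 : Fin 2))).length) := by
      rw [hedges, ← List.countP_eq_length_filter]
      exact hev
    intro col
    have hcol : col = 0 ∨ col = 1 := by omega
    rcases hcol with rfl | rfl
    · exact hev0
    · have htot := filter_fin2 χ ((mkWalk G a a l₁ ch).edges)
      have hlen : (mkWalk G a a l₁ ch).edges.length = n := by
        rw [SimpleGraph.Walk.length_edges]
        rw [hham.length_eq]
      rw [Nat.even_iff] at hev0 ⊢
      have hevn : n % 2 = 0 := by omega
      omega
  -- parity of the sum of the two cycle counts
  have hsh1 : (a :: ((R ++ (c :: M)) ++ [a])) =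
      a :: (w₁ :: (l ++ (w₂ :: (c :: (M ++ [a]))))) := by rw [hR]; simp
  have hsh2 : (a :: ((M ++ (c :: R)) ++ [a])) =
      a :: (M ++ (c :: (w₁ :: (l ++ (w₂ :: [a]))))) := by rw [hR]; simp
  have hC4 : (List.countP (fun e => χ e = (0 : Fin 2)) [s(a, w₁), s(w₂, c)] +
      List.countP (fun e => χ e = (0 : Fin 2)) [s(c, w₁), s(w₂, a)]) % 2 =
      (List.countP (fun e => χ e = (0 : Fin 2))
        [s(a, b), s(b, c), s(c, d), s(d, a)]) % 2 := by
    rcases hperm12 with ⟨h1, h2⟩ | ⟨h1, h2⟩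
    · rw [h1, h2]
      rw [show s(d, c) = s(c, d) from Sym2.eq_swap,
        show s(c, b) = s(b, c) from Sym2.eq_swap]
      simp only [List.countP_cons, List.countP_nil]
      omega
    · rw [h1, h2]
      rw [show s(a, d) = s(d, a) from Sym2.eq_swap,
        show s(b, a) = s(a, b) from Sym2.eq_swap]
      simp only [List.countP_cons, List.countP_nil]
      omega
  have hMpart : (List.countP (fun e => χ e = (0 : Fin 2)) (eList (c :: (M ++ [a]))) +
      List.countP (fun e => χ e = (0 : Fin 2)) (eList (a :: M ++ [c]))) % 2 = 0 := by
    rcases hM with ⟨rfl, -⟩ | ⟨t, rfl, -⟩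
    · simp only [List.nil_append, List.cons_append, List.singleton_append, eList_cons_cons,
        eList_single, eList_nil, List.countP_cons, List.countP_nil]
      rw [show s(c, a) = s(a, c) from Sym2.eq_swap]
      omega
    · simp only [List.nil_append, List.cons_append, List.singleton_append, eList_cons_cons,
        eList_single, eList_nil, List.countP_cons, List.countP_nil]
      rw [show s(t, a) = s(a, t) from Sym2.eq_swap,
        show s(t, c) = s(c, t) from Sym2.eq_swap]
      omega
  have hsum : Odd (List.countP (fun e => χ e = (0 : Fin 2))
        (eList (a :: ((R ++ (c :: M)) ++ [a]))) +
      List.countP (fun e => χ e = (0 : Fin 2))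
        (eList (a :: ((M ++ (c :: R)) ++ [a])))) := by
    rw [hsh1, hsh2, cycle_count1, cycle_count2]
    rw [Nat.odd_iff] at hodd ⊢
    omega
  rw [Nat.odd_iff] at hsum
  have hkey : Even (List.countP (fun e => χ e = (0 : Fin 2))
        (eList (a :: ((R ++ (c :: M)) ++ [a])))) ∨
      Even (List.countP (fun e => χ e = (0 : Fin 2))
        (eList (a :: ((M ++ (c :: R)) ++ [a])))) := by
    rw [Nat.even_iff, Nat.even_iff]
    omega
  rcases hkey with h | h
  · exact hfinish _ chain1 hlen1 nodup1 cover1 h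
  · exact hfinish _ chain2 hlen2 nodup2 cover2 h


end EvenHam

open EvenHam in
/-- **Proposition.** Let `n ≥ 4` be even and `G` an `n`-vertex graph with
`δ(G) ≥ n/2 + 2`, whose edges are 2-colored by `χ`. If `G` contains an
odd-chromatic copy of `C₄`, then `G` contains an even-chromatic Hamilton
cycle. -/
theorem even_hamilton_of_odd_C4 (n : ℕ) (hn : 4 ≤ n) (hne : Even n)
    (G : SimpleGraph (Fin n)) [DecidableRel G.Adj]
    (hδ : n / 2 + 2 ≤ G.minDegree)
    (χ : Sym2 (Fin n) → Fin 2)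
    (hC4 : ∃ a b c d : Fin n,
      a ≠ b ∧ a ≠ c ∧ a ≠ d ∧ b ≠ c ∧ b ≠ d ∧ c ≠ d ∧
      G.Adj a b ∧ G.Adj b c ∧ G.Adj c d ∧ G.Adj d a ∧
      ∃ col : Fin 2,
        Odd (([s(a, b), s(b, c), s(c, d), s(d, a)].filter
          (fun e => χ e = col)).length)) :
    ∃ (a : Fin n) (w : G.Walk a a), w.IsHamiltonianCycle ∧
      ∀ c : Fin 2, Even ((w.edges.filter (fun e => χ e = c)).length) := by
  classical
  obtain ⟨a, b, c, d, hab', hac, had, hbc', hbd, hcd', hab, hbc, hcd, hda, col, hcol⟩ := hC4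
  have hcardfin : Fintype.card (Fin n) = n := Fintype.card_fin n
  have hvdeg : ∀ v, n / 2 + 2 ≤ G.degree v := fun v =>
    le_trans hδ (G.minDegree_le_degree v)
  have hn2 : n / 2 * 2 = n := Nat.div_mul_cancel hne.two_dvd
  have hn6 : 6 ≤ n := by
    have h1 := G.degree_lt_card_verts a
    rw [hcardfin] at h1
    have h2 := hvdeg a
    have h3 := Nat.even_iff.1 hne
    omega
  have hodd0 : Odd (List.countP (fun e => χ e = (0 : Fin 2))
      [s(a, b), s(b, c), s(c, d), s(d, a)]) := by
    have hcol01 : col = 0 ∨ col = 1 := by omega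
    have htot := filter_fin2 χ [s(a, b), s(b, c), s(c, d), s(d, a)]
    rw [List.countP_eq_length_filter]
    rcases hcol01 with rfl | rfl
    · exact hcol
    · rw [Nat.odd_iff] at hcol ⊢
      have h4 : ([s(a, b), s(b, c), s(c, d), s(d, a)] : List (Sym2 (Fin n))).length = 4 := rfl
      omega
  have hM : ∃ M : List (Fin n), (M = [] ∧ G.Adj c a) ∨
      ∃ t, M = [t] ∧ G.Adj c t ∧ G.Adj t a ∧ t ≠ a ∧ t ≠ b ∧ t ≠ c ∧ t ≠ d := by
    by_cases hdiag : G.Adj c a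
    · exact ⟨[], Or.inl ⟨rfl, hdiag⟩⟩
    · have hnac : ¬G.Adj a c := fun h => hdiag h.symm
      have hsub : G.neighborFinset a ∪ G.neighborFinset c ⊆
          (Finset.univ.erase c).erase a := by
        intro z hz
        rw [Finset.mem_erase, Finset.mem_erase]
        rcases Finset.mem_union.1 hz with h | h
        · rw [SimpleGraph.mem_neighborFinset] at h
          refine ⟨fun hh => G.irrefl (hh ▸ h), fun hh => hnac (hh ▸ h), Finset.mem_univ _⟩
        · rw [SimpleGraph.mem_neighborFinset] at h
          refine ⟨fun hh => hdiag (hh ▸ h), fun hh => G.irrefl (hh ▸ h), Finset.mem_univ _⟩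
      have hcu : ((Finset.univ.erase c).erase a).card = n - 2 := by
        rw [Finset.card_erase_of_mem (Finset.mem_erase.2 ⟨hac, Finset.mem_univ _⟩)]
        rw [Finset.card_erase_of_mem (Finset.mem_univ _), Finset.card_univ, hcardfin]
        omega
      have hinter : 6 ≤ (G.neighborFinset a ∩ G.neighborFinset c).card := by
        have h1 := Finset.card_union_add_card_inter (G.neighborFinset a) (G.neighborFinset c)
        have h2 := Finset.card_le_card hsub
        have h3 : (G.neighborFinset a).card = G.degree a := rfl
        have h4 : (G.neighborFinset c).card = G.degree c := rfl
        have h5 := hvdeg a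
        have h6 := hvdeg c
        omega
      have h4le : ({a, b, c, d} : Finset (Fin n)).card ≤ 4 := by
        apply le_trans (Finset.card_insert_le _ _)
        have : ({b, c, d} : Finset (Fin n)).card ≤ 3 := by
          apply le_trans (Finset.card_insert_le _ _)
          have : ({c, d} : Finset (Fin n)).card ≤ 2 := by
            apply le_trans (Finset.card_insert_le _ _)
            simp
          omega
        omega
      have hT : 0 < ((G.neighborFinset a ∩ G.neighborFinset c) \ {a, b, c, d}).card := by
        have := Finset.le_card_sdiff ({a, b, c, d} : Finset (Fin n))
          (G.neighborFinset a ∩ G.neighborFinset c)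
        omega
      obtain ⟨t, ht⟩ := Finset.card_pos.1 hT
      rw [Finset.mem_sdiff, Finset.mem_inter, SimpleGraph.mem_neighborFinset,
        SimpleGraph.mem_neighborFinset] at ht
      obtain ⟨⟨hat, hct⟩, hnot⟩ := ht
      simp only [Finset.mem_insert, Finset.mem_singleton] at hnot
      push_neg at hnot
      exact ⟨[t], Or.inr ⟨t, rfl, hct, hat.symm, hnot.1, hnot.2.1, hnot.2.2.1, hnot.2.2.2⟩⟩
  obtain ⟨M, hMspec⟩ := hM
  have := assemble G (by rw [hcardfin]; exact hn6) (by rw [hcardfin]; exact hne)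
    (fun v => by rw [hcardfin]; exact hvdeg v) a b c d hab' hac had hbc' hbd hcd'
    hab hbc hcd hda χ M hMspec hodd0
  exact this
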